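/- Let Q be an even lattice. Then there exists a bimultiplicative function ε : Q × Q → {±1} such that ε(α, α) = (−1)^{|α|²(|α|²+1)/2} for all α ∈ Q. -/

import Mathlib

private lemma negOnePow_congr (m k : ℤ) (h : m % 2 = k % 2) :
    (-1 : ℤˣ) ^ m = (-1 : ℤˣ) ^ k := by
  obtain ⟨r, hr⟩ : ∃ r, m = k + 2 * r := ⟨(m - k) / 2, by omega⟩
  have h2 : ((-1 : ℤˣ)) ^ (2 * r) = 1 := by
    rw [zpow_mul, show ((-1 : ℤˣ)) ^ (2 : ℤ) = 1 by decide, one_zpow]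
  rw [hr, zpow_add, h2, mul_one]

/-- on an even lattice `Q` (a finite-rank free abelian group with a
symmetric integer-valued bilinear form `B` such that `B α α` is even), there
exists a bimultiplicative function `ε : Q × Q → {±1}` with
`ε(α,α) = (−1)^{|α|²(|α|²+1)/2}`. -/
theorem exists_epsilon_bimultiplicative
    (Q : Type*) [AddCommGroup Q] [Module.Free ℤ Q] [Module.Finite ℤ Q]
    (B : Q →ₗ[ℤ] Q →ₗ[ℤ] ℤ)
    (hsymm : ∀ α β : Q, B α β = B β α)
    (heven : ∀ α : Q, 2 ∣ B α α) :
    ∃ ε : Q → Q → ℤˣ,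
      (∀ α β γ : Q, ε (α + β) γ = ε α γ * ε β γ) ∧
      (∀ α β γ : Q, ε α (β + γ) = ε α β * ε α γ) ∧
      (∀ α : Q, ε α α = (-1 : ℤˣ) ^ (B α α * (B α α + 1) / 2)) := by
  classical
  set n := Module.finrank ℤ Q with hn
  let b : Module.Basis (Fin n) ℤ Q := Module.finBasis ℤ Q
  let M : Fin n → Fin n → ℤ := fun i j =>
    if i < j then B (b i) (b j) else if i = j then B (b i) (b i) / 2 else 0
  let C : Q →ₗ[ℤ] Q →ₗ[ℤ] ℤ := b.constr ℤ (fun i => b.constr ℤ (fun j => M i j))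
  have hC : ∀ i j, C (b i) (b j) = M i j := by
    intro i j
    simp [C, Module.Basis.constr_basis]
  -- C α β + C β α = B α β
  have hsum : ∀ α β : Q, C α β + C β α = B α β := by
    have : C + C.flip = B := by
      apply b.ext; intro i
      apply b.ext; intro j
      simp only [LinearMap.add_apply, LinearMap.flip_apply, hC]
      rcases lt_trichotomy i j with h | h | h
      · have h1 : ¬ (j < i) := not_lt.mpr h.le
        have h2 : ¬ (j = i) := fun e => absurd e.symm h.ne
        simp [M, h, h1, h2]
      · subst h
        obtain ⟨k, hk⟩ := heven (b i)
        simp only [M, lt_irrefl, if_false, if_pos rfl, if_true, ite_true, ite_false, hk]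
        omega
      · have h1 : ¬ (i < j) := not_lt.mpr h.le
        have h2 : ¬ (i = j) := fun e => absurd e h.ne'
        simp [M, h, h1, h2, hsymm (b j) (b i)]
    intro α β
    have h2 := LinearMap.congr_fun (LinearMap.congr_fun this α) β
    simpa using h2
  -- 2 * C α α = B α α
  have hhalf : ∀ α : Q, 2 * C α α = B α α := by
    let f : Q →+ ℤ :=
      { toFun := fun α => B α α - 2 * C α α
        map_zero' := by simp
        map_add' := by
          intro α β
          have hB : B (α + β) (α + β) = B α α + B α β + B β α + B β β := by
            simp [map_add, LinearMap.add_apply]; ring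
          have hCab : C (α + β) (α + β) = C α α + C α β + C β α + C β β := by
            simp [map_add, LinearMap.add_apply]; ring
          have h1 := hsum α β
          have h2 := hsymm α β
          simp only [hB, hCab]
          omega }
    have hf : f.toIntLinearMap = 0 := by
      apply b.ext; intro i
      obtain ⟨k, hk⟩ := heven (b i)
      simp only [AddMonoidHom.coe_toIntLinearMap, LinearMap.zero_apply]
      show B (b i) (b i) - 2 * C (b i) (b i) = 0
      rw [hC]
      simp only [M, lt_irrefl, if_false, if_pos rfl, if_true, ite_true, ite_false, hk]
      omega
    intro α
    have h3 := LinearMap.congr_fun hf α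
    simp only [AddMonoidHom.coe_toIntLinearMap, LinearMap.zero_apply] at h3
    have h4 : B α α - 2 * C α α = 0 := h3
    omega
  refine ⟨fun α β => (-1 : ℤˣ) ^ (C α β), ?_, ?_, ?_⟩
  · intro α β γ
    show (-1 : ℤˣ) ^ (C (α + β)) γ = (-1 : ℤˣ) ^ (C α) γ * (-1 : ℤˣ) ^ (C β) γ
    rw [map_add, LinearMap.add_apply, zpow_add]
  · intro α β γ
    show (-1 : ℤˣ) ^ (C α) (β + γ) = (-1 : ℤˣ) ^ (C α) β * (-1 : ℤˣ) ^ (C α) γ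
    rw [map_add, zpow_add]
  · intro α
    have hq : B α α = 2 * C α α := (hhalf α).symm
    set m := C α α with hm
    have hexp : B α α * (B α α + 1) / 2 = m * (2 * m + 1) := by
      have h1 : B α α * (B α α + 1) = 2 * (m * (2 * m + 1)) := by
        rw [hq]; ring
      rw [h1, Int.mul_ediv_cancel_left _ two_ne_zero]
    rw [hexp]
    apply negOnePow_congr
    have h2 : m * (2 * m + 1) = m + 2 * (m * m) := by ring
    rw [h2, Int.add_mul_emod_self_left]
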